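/- For θ ∈ [0,1] and r > −1, define E(θ, r) = θ(1−θ)[(2θ−1)Δ + (1−θ)d_i − θd_{i+1}]·h / [1+(r−3)θ(1−θ)]. Then |E(θ, r)| ≤ h(|Δ| + max(|d_i|, |d_{i+1}|))/(4 + r − 3) for r ≥ 3, and in particular E(θ, r) → 0 uniformly in θ ∈ [0,1] as r → +∞. (Tension property: as the shape parameter tends to infinity the rational cubic interpolant converges to the linear interpolant on each subinterval.) -/
import Mathlib

lemma aux_bound_17 (h Δ di di1 r θ : ℝ) (hh : 0 < h) (hr : r ≥ 3)
    (h0 : 0 ≤ θ) (h1 : θ ≤ 1) :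
    |θ * (1 - θ) * ((2 * θ - 1) * Δ + (1 - θ) * di - θ * di1) * h /
      (1 + (r - 3) * θ * (1 - θ))| ≤ h * (|Δ| + max |di| |di1|) / (4 + r - 3) := by
  set M := max |di| |di1| with hM
  have hM0 : 0 ≤ M := le_trans (abs_nonneg di) (le_max_left _ _)
  have hC : 0 ≤ |Δ| + M := add_nonneg (abs_nonneg Δ) hM0
  have ht0 : 0 ≤ θ * (1 - θ) := mul_nonneg h0 (by linarith)
  have ht4 : θ * (1 - θ) ≤ 1 / 4 := by nlinarith [sq_nonneg (θ - 1/2)]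
  have hD : 0 < 1 + (r - 3) * θ * (1 - θ) := by nlinarith
  have hinner : |(2 * θ - 1) * Δ + (1 - θ) * di - θ * di1| ≤ |Δ| + M := by
    have h2 : |2 * θ - 1| ≤ 1 := by rw [abs_le]; constructor <;> linarith
    calc |(2 * θ - 1) * Δ + (1 - θ) * di - θ * di1|
        ≤ |(2 * θ - 1) * Δ| + |(1 - θ) * di| + |θ * di1| := by
          apply (abs_sub _ _).trans
          gcongr
          exact abs_add_le _ _
      _ = |2 * θ - 1| * |Δ| + (1 - θ) * |di| + θ * |di1| := by
          rw [abs_mul, abs_mul, abs_mul, abs_of_nonneg (by linarith : (0:ℝ) ≤ 1 - θ),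
            abs_of_nonneg h0]
      _ ≤ 1 * |Δ| + (1 - θ) * M + θ * M := by
          gcongr <;> first | exact abs_nonneg Δ | exact le_max_left |di| |di1| | exact le_max_right |di| |di1| | linarith
      _ = |Δ| + M := by ring
  rw [abs_div, abs_of_pos hD, div_le_div_iff₀ hD (by linarith : (0:ℝ) < 4 + r - 3)]
  have hnum : |θ * (1 - θ) * ((2 * θ - 1) * Δ + (1 - θ) * di - θ * di1) * h|
      ≤ θ * (1 - θ) * (|Δ| + M) * h := by
    rw [abs_mul, abs_mul, abs_of_nonneg ht0, abs_of_pos hh]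
    gcongr
  calc |θ * (1 - θ) * ((2 * θ - 1) * Δ + (1 - θ) * di - θ * di1) * h| * (4 + r - 3)
      ≤ θ * (1 - θ) * (|Δ| + M) * h * (4 + r - 3) := by
        gcongr; linarith
    _ ≤ h * (|Δ| + M) * (1 + (r - 3) * θ * (1 - θ)) := by
        nlinarith [mul_nonneg (mul_nonneg hC hh.le) (by linarith : (0:ℝ) ≤ r - 3),
          mul_nonneg (mul_nonneg hC hh.le) (by nlinarith : (0:ℝ) ≤ 1 - 4 * (θ * (1 - θ)))]

theorem stmt_17 (h Δ di di1 : ℝ) (hh : 0 < h)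
    (E : ℝ → ℝ → ℝ)
    (hE : ∀ θ r : ℝ, E θ r = θ * (1 - θ) * ((2 * θ - 1) * Δ + (1 - θ) * di - θ * di1) * h /
      (1 + (r - 3) * θ * (1 - θ))) :
    (∀ r : ℝ, r ≥ 3 → ∀ θ ∈ Set.Icc (0:ℝ) 1,
      |E θ r| ≤ h * (|Δ| + max |di| |di1|) / (4 + r - 3)) ∧
    TendstoUniformlyOn (fun (r : ℝ) (θ : ℝ) => E θ r) 0 Filter.atTop
      (Set.Icc (0:ℝ) 1) := by
  have key : ∀ r : ℝ, r ≥ 3 → ∀ θ ∈ Set.Icc (0:ℝ) 1,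
      |E θ r| ≤ h * (|Δ| + max |di| |di1|) / (4 + r - 3) := by
    intro r hr θ hθ
    rw [hE]
    exact aux_bound_17 h Δ di di1 r θ hh hr hθ.1 hθ.2
  refine ⟨key, ?_⟩
  rw [Metric.tendstoUniformlyOn_iff]
  intro ε hε
  set C := h * (|Δ| + max |di| |di1|) with hCdef
  have hC0 : 0 ≤ C := by positivity
  filter_upwards [Filter.eventually_ge_atTop (max 3 (C / ε))] with r hrge θ hθ
  have hr3 : r ≥ 3 := le_trans (le_max_left _ _) hrge
  have hrC : C / ε ≤ r := le_trans (le_max_right _ _) hrge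
  have hbd := key r hr3 θ hθ
  have h1 : C / (4 + r - 3) < ε := by
    rw [div_lt_iff₀ (by linarith : (0:ℝ) < 4 + r - 3)]
    have : C / ε < r + 1 := by linarith
    rw [div_lt_iff₀ hε] at this
    linarith
  simp only [Pi.zero_apply, dist_eq_norm, Real.norm_eq_abs, zero_sub, abs_neg]
  calc |E θ r| ≤ C / (4 + r - 3) := hbd
    _ < ε := h1
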